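/- Let W be a 2-dimensional complex vector space and let n ≤ m be positive integers. The linear map S^{m−1}W* ⊗ Λ^n(S^{m+n−2}W) → S^{n−1}W ⊗ Λ^{n−1}(S^{m+n−2}W) defined on decomposable elements by g ⊗ (f₁ ∧ ⋯ ∧ f_n) ↦ Σ_{i=1}^n (−1)^{i−1} (g · f_i) ⊗ (f₁ ∧ ⋯ f̂_i ⋯ ∧ f_n), where g · f denotes the contraction of the polynomial f ∈ S^{m+n−2}W by g ∈ S^{m−1}W*, is surjective. -/

import Mathlib

open TensorProduct

noncomputable section
namespace LO

/-- The `k`-th exterior power `Λ^k M` (as a submodule of the exterior algebra). -/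
def ExtPow (k : ℕ) (M : Type*) [AddCommGroup M] [Module ℂ M] :
    Submodule ℂ (ExteriorAlgebra ℂ M) := ⋀[ℂ]^k M

variable {M N : Type*} [AddCommGroup M] [Module ℂ M] [AddCommGroup N] [Module ℂ N]

/-- The decomposable element `v 0 ∧ ⋯ ∧ v (k-1)` of the `k`-th exterior power. -/
def wedgeFamily (k : ℕ) (v : Fin k → M) : ExtPow k M :=
  ⟨ExteriorAlgebra.ιMulti ℂ k v, ExteriorAlgebra.ιMulti_range ℂ k ⟨v, rfl⟩⟩

/-- Homogeneous polynomials of degree `d` in two variables: a model for the symmetric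
power `S^d W` of a 2-dimensional space `W`. -/
abbrev SymW (d : ℕ) := MvPolynomial.homogeneousSubmodule (Fin 2) ℂ d

/-- The `d`-th power `l^d` of a linear form `l ∈ W ≅ ℂ²`, as a homogeneous polynomial of
degree `d`. -/
def powH (l : Fin 2 → ℂ) (d : ℕ) : SymW d :=
  ⟨(l 0 • MvPolynomial.X 0 + l 1 • MvPolynomial.X 1) ^ d, by
    have h1 : ((l 0 • MvPolynomial.X 0 + l 1 • MvPolynomial.X 1 :
        MvPolynomial (Fin 2) ℂ)).IsHomogeneous 1 := by
      have := ((MvPolynomial.isHomogeneous_X ℂ (0 : Fin 2)).C_mul (l 0)).add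
        ((MvPolynomial.isHomogeneous_X ℂ (1 : Fin 2)).C_mul (l 1))
      simpa [MvPolynomial.smul_eq_C_mul] using this
    simpa using h1.pow d⟩

open MvPolynomial in
/-- The monomial `X^k Y^(d-k)` as an element of `SymW d`. -/
def monH (d : ℕ) (k : Fin (d + 1)) : SymW d :=
  ⟨X 0 ^ (k : ℕ) * X 1 ^ (d - (k : ℕ)), by
    have := (isHomogeneous_X_pow (R := ℂ) (0 : Fin 2) (k : ℕ)).mul
      (isHomogeneous_X_pow (R := ℂ) (1 : Fin 2) (d - (k : ℕ)))
    have hk : (k : ℕ) + (d - (k : ℕ)) = d := by omega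
    simpa [hk] using this⟩

open MvPolynomial in
lemma powH_expand (d : ℕ) (t : ℂ) :
    powH ![1, t] d = ∑ k : Fin (d + 1),
      (t ^ (d - (k : ℕ)) * (d.choose (k : ℕ) : ℂ)) • monH d k := by
  apply Subtype.ext
  push_cast [powH, monH, Submodule.coe_sum]
  rw [one_smul, add_pow, Fin.sum_univ_eq_sum_range
      (fun k => (t ^ (d - k) * (d.choose k : ℂ)) • (X (0:Fin 2) ^ k * X 1 ^ (d - k)))]
  refine Finset.sum_congr rfl fun k _ => ?_
  rw [smul_pow, smul_eq_C_mul, smul_eq_C_mul]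
  simp only [map_mul, map_pow, MvPolynomial.C_eq_coe_nat]
  ring


set_option synthInstance.maxHeartbeats 1000000 in
open MvPolynomial in
lemma span_powH (d : ℕ) (F : Set ℂ) (hF : F.Finite) :
    Submodule.span ℂ ((fun t => powH ![1, t] d) '' Fᶜ) = ⊤ := by
  by_contra hne
  obtain ⟨ψ, hψ0, hψ⟩ := Submodule.exists_dual_map_eq_bot_of_lt_top
    (lt_top_iff_ne_top.2 hne) inferInstance
  have hker : ∀ x ∈ Submodule.span ℂ ((fun t => powH ![1, t] d) '' Fᶜ), ψ x = 0 := by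
    intro x hx
    have : ψ x ∈ (Submodule.span ℂ ((fun t => powH ![1, t] d) '' Fᶜ)).map ψ :=
      Submodule.mem_map_of_mem hx
    rw [hψ] at this
    simpa using this
  set P : Polynomial ℂ := ∑ k : Fin (d + 1),
    Polynomial.C ((d.choose (k : ℕ) : ℂ) * ψ (monH d k)) * Polynomial.X ^ (d - (k : ℕ)) with hP
  have hPeval : ∀ t : ℂ, P.eval t = ψ (powH ![1, t] d) := by
    intro t
    rw [powH_expand, map_sum, hP]
    simp only [Polynomial.eval_finset_sum, Polynomial.eval_mul, Polynomial.eval_C,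
      Polynomial.eval_pow, Polynomial.eval_X, map_smul, smul_eq_mul]
    exact Finset.sum_congr rfl fun k _ => by ring
  have hP0 : P = 0 := by
    apply Polynomial.eq_zero_of_infinite_isRoot
    apply Set.Infinite.mono (s := Fᶜ) ?_ (Set.Finite.infinite_compl hF)
    intro t ht
    simp only [Set.mem_setOf_eq, Polynomial.IsRoot, hPeval]
    exact hker _ (Submodule.subset_span ⟨t, ht, rfl⟩)
  have hcoeff : ∀ k : Fin (d + 1), ψ (monH d k) = 0 := by
    intro k
    have h1 : P.coeff (d - (k : ℕ)) = 0 := by rw [hP0]; simp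
    rw [hP, Polynomial.finset_sum_coeff] at h1
    simp only [Polynomial.coeff_C_mul, Polynomial.coeff_X_pow] at h1
    have hne' : ∀ j : Fin (d + 1), j ∈ Finset.univ → j ≠ k →
        (d.choose (j : ℕ) : ℂ) * ψ (monH d j) *
          (if d - (k : ℕ) = d - (j : ℕ) then 1 else 0) = 0 := by
      intro j _ hjk
      have hj := j.isLt; have hk := k.isLt
      have hjk' : ¬ (d - (k : ℕ) = d - (j : ℕ)) := by
        intro heq; exact hjk (Fin.ext (by omega))
      simp [hjk']
    rw [Finset.sum_eq_single k hne' (fun h => absurd (Finset.mem_univ k) h),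
      if_pos rfl, mul_one] at h1
    rcases mul_eq_zero.1 h1 with h | h
    · exact absurd h (Nat.cast_ne_zero.2 (Nat.choose_pos (Nat.lt_succ_iff.mp k.isLt)).ne')
    · exact h
  apply hψ0
  ext x
  obtain ⟨p, hp⟩ := x
  have hmem : p.IsHomogeneous d := hp
  have hdeg : ∀ v ∈ p.support, v 0 + v 1 = d := by
    intro v hv
    have h1 : v.degree = d := by
      by_contra h
      exact mem_support_iff.1 hv (hmem.coeff_eq_zero h)
    rw [← h1, Finsupp.degree_apply,
      show ∑ i ∈ v.support, v i = ∑ i : Fin 2, v i from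
        Finset.sum_subset (Finset.subset_univ _)
          (fun i _ hi => Finsupp.notMem_support_iff.1 hi), Fin.sum_univ_two]
  have key : (⟨p, hp⟩ : SymW d) = ∑ v ∈ p.support,
      (if h : v 0 + v 1 = d then (coeff v p) • monH d ⟨v 0, by omega⟩ else 0) := by
    apply Subtype.ext
    rw [AddSubmonoidClass.coe_finset_sum]
    refine p.as_sum.trans (Finset.sum_congr rfl fun v hv => ?_)
    rw [dif_pos (hdeg v hv)]
    have h2 : d - v 0 = v 1 := by have := hdeg v hv; omega
    simp only [SetLike.val_smul, monH, h2]
    rw [monomial_eq, Finsupp.prod_fintype _ _ (fun i => pow_zero _), Fin.prod_univ_two,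
      smul_eq_C_mul]
  rw [key, map_sum, LinearMap.zero_apply]
  apply Finset.sum_eq_zero
  intro v hv
  rw [dif_pos (hdeg v hv), map_smul, hcoeff, smul_zero]

lemma span_wedgeFamily (k : ℕ) :
    Submodule.span ℂ (Set.range (wedgeFamily k (M := M))) = ⊤ := by
  apply Submodule.map_injective_of_injective
    (show Function.Injective (ExtPow k M).subtype from Subtype.coe_injective)
  rw [Submodule.map_span, Submodule.map_top, Submodule.range_subtype]
  have himg : (ExtPow k M).subtype '' Set.range (wedgeFamily k) =
      Set.range (ExteriorAlgebra.ιMulti ℂ k (M := M)) := by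
    ext x
    constructor
    · rintro ⟨y, ⟨f, rfl⟩, rfl⟩; exact ⟨f, rfl⟩
    · rintro ⟨f, rfl⟩; exact ⟨wedgeFamily k f, ⟨f, rfl⟩, rfl⟩
  rw [himg, ExteriorAlgebra.ιMulti_span_fixedDegree]
  rfl

lemma multilinear_mem_of_span {ι : Type*} [Fintype ι] [DecidableEq ι]
    {T : Type*} [AddCommMonoid T] [Module ℂ T]
    (μ : MultilinearMap ℂ (fun _ : ι => M) T) (R : Submodule ℂ T) (S : Set M)
    (hS : Submodule.span ℂ S = ⊤)
    (h : ∀ g : ι → M, (∀ j, g j ∈ S) → μ g ∈ R) (f : ι → M) : μ f ∈ R := by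
  suffices H : ∀ (A : Finset ι), ∀ f : ι → M, (∀ j, j ∉ A → f j ∈ S) → μ f ∈ R by
    exact H Finset.univ f (fun j hj => absurd (Finset.mem_univ j) hj)
  intro A
  induction A using Finset.induction_on with
  | empty => exact fun f hf => h f (fun j => hf j (Finset.notMem_empty j))
  | @insert j A hj IH =>
    intro f hf
    have hfj : f j ∈ Submodule.span ℂ S := hS ▸ Submodule.mem_top
    have H : ∀ x ∈ Submodule.span ℂ S, μ (Function.update f j x) ∈ R := by
      intro x hx
      induction hx using Submodule.span_induction with
      | mem x hxS =>
        apply IH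
        intro k hk
        rcases eq_or_ne k j with rfl | hkj
        · rw [Function.update_self]; exact hxS
        · rw [Function.update_of_ne hkj]
          exact hf k (by simp [hkj, hk])
      | zero =>
        rw [μ.map_update_zero]; exact R.zero_mem
      | add x y hx hy ihx ihy =>
        rw [μ.map_update_add]; exact R.add_mem ihx ihy
      | smul a x hx ih =>
        rw [μ.map_update_smul]; exact R.smul_mem a ih
    have := H (f j) hfj
    rwa [Function.update_eq_self] at this

set_option maxHeartbeats 2000000 in
set_option synthInstance.maxHeartbeats 2000000 in
/-- (Writing `n = n' + 1` for a positive integer `n ≤ m`.)  The linear map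
`S^{m-1}W^* ⊗ Λ^n(S^{m+n-2}W) → S^{n-1}W ⊗ Λ^{n-1}(S^{m+n-2}W)` defined on
decomposable elements by
`g ⊗ (f₁ ∧ ⋯ ∧ f_n) ↦ Σᵢ (-1)^{i-1} (g·fᵢ) ⊗ (f₁ ∧ ⋯ f̂ᵢ ⋯ ∧ f_n)`
is surjective; here `g·f` is the contraction, characterized by `g·l^{m+n-2} = g(l)·l^{n-1}`. -/
theorem contraction_wedge_map_surjective (m n' : ℕ) (hm : n' + 1 ≤ m)
    (contr : ↥(SymW (m-1)) →ₗ[ℂ] ↥(SymW (m+n'-1)) →ₗ[ℂ] ↥(SymW n'))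
    (hcontr : ∀ (g : SymW (m-1)) (l : Fin 2 → ℂ),
      contr g (powH l (m+n'-1)) = (MvPolynomial.eval l (g : MvPolynomial (Fin 2) ℂ)) • powH l n')
    (φ : (↥(SymW (m-1))) ⊗[ℂ] ↥(ExtPow (n'+1) ↥(SymW (m+n'-1))) →ₗ[ℂ]
      (↥(SymW n')) ⊗[ℂ] ↥(ExtPow n' ↥(SymW (m+n'-1))))
    (hφ : ∀ (g : SymW (m-1)) (f : Fin (n'+1) → SymW (m+n'-1)),
      φ (g ⊗ₜ[ℂ] wedgeFamily (n'+1) f) =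
        ∑ i : Fin (n'+1), ((-1 : ℂ)^(i : ℕ)) •
          ((contr g (f i)) ⊗ₜ[ℂ] wedgeFamily n' (fun j => f (i.succAbove j)))) :
    Function.Surjective φ := by
  rw [← LinearMap.range_eq_top]
  set R := LinearMap.range φ with hR
  have core : ∀ (t : ℂ) (s : Fin n' → ℂ), (∀ j, s j ≠ t) →
      (powH ![1, t] n') ⊗ₜ[ℂ] wedgeFamily n' (fun j => powH ![1, s j] (m+n'-1)) ∈ R := by
    intro t s hst
    set g0 : MvPolynomial (Fin 2) ℂ :=
      (∏ j : Fin n', ((s j) • MvPolynomial.X 0 - MvPolynomial.X 1)) *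
        MvPolynomial.X 0 ^ (m - 1 - n') with hg0
    have hg0hom : g0.IsHomogeneous (m - 1) := by
      have h1 : ∀ j : Fin n', (((s j) • MvPolynomial.X 0 - MvPolynomial.X 1 :
          MvPolynomial (Fin 2) ℂ)).IsHomogeneous 1 := fun j => by
        simpa [MvPolynomial.smul_eq_C_mul] using
          ((MvPolynomial.isHomogeneous_X ℂ (0 : Fin 2)).C_mul (s j)).sub
            (MvPolynomial.isHomogeneous_X ℂ (1 : Fin 2))
      have h2 := MvPolynomial.IsHomogeneous.prod Finset.univ
        (fun j : Fin n' => (s j) • MvPolynomial.X 0 - MvPolynomial.X 1) (fun _ => 1)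
        (fun j _ => h1 j)
      have h3 := h2.mul (MvPolynomial.isHomogeneous_X_pow (0 : Fin 2) (m - 1 - n'))
      simp only [Finset.sum_const, Finset.card_univ, Fintype.card_fin, smul_eq_mul,
        mul_one] at h3
      have h4 : n' + (m - 1 - n') = m - 1 := by omega
      rwa [h4] at h3
    have hevalt : MvPolynomial.eval ![1, t] g0 = ∏ j, (s j - t) := by
      rw [hg0, map_mul, map_prod, map_pow]
      simp [MvPolynomial.smul_eq_C_mul]
    have hevals : ∀ j0, MvPolynomial.eval ![1, s j0] g0 = 0 := by
      intro j0
      rw [hg0, map_mul, map_prod]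
      apply mul_eq_zero_of_left
      apply Finset.prod_eq_zero (Finset.mem_univ j0)
      simp [MvPolynomial.smul_eq_C_mul]
    have hc : (∏ j, (s j - t)) ≠ 0 :=
      Finset.prod_ne_zero_iff.2 (fun j _ => sub_ne_zero.2 (hst j))
    set g : SymW (m-1) := ⟨g0, hg0hom⟩ with hg
    set Ffam : Fin (n'+1) → SymW (m+n'-1) :=
      Fin.cons (powH ![1,t] (m+n'-1)) (fun j => powH ![1,s j] (m+n'-1)) with hFfam
    have hφF := hφ g Ffam
    rw [Fin.sum_univ_succ] at hφF
    have hzero : ∀ j : Fin n', ((-1:ℂ)^(((j.succ : Fin (n'+1))) : ℕ)) •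
        ((contr g (Ffam j.succ)) ⊗ₜ[ℂ]
          wedgeFamily n' (fun i => Ffam (j.succ.succAbove i))) = 0 := by
      intro j
      have h5 : contr g (Ffam j.succ) = 0 := by
        have : Ffam j.succ = powH ![1, s j] (m+n'-1) := by rw [hFfam, Fin.cons_succ]
        rw [this, hcontr g ![1, s j]]
        rw [show ((g : MvPolynomial (Fin 2) ℂ)) = g0 from rfl, hevals j, zero_smul]
      rw [h5, TensorProduct.zero_tmul, smul_zero]
    rw [Finset.sum_eq_zero (fun j _ => hzero j), add_zero] at hφF
    have h0 : Ffam 0 = powH ![1,t] (m+n'-1) := by rw [hFfam, Fin.cons_zero]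
    have hwedge : (fun i => Ffam ((0 : Fin (n'+1)).succAbove i)) =
        fun i => powH ![1, s i] (m+n'-1) := by
      funext i
      rw [Fin.succAbove_zero, hFfam, Fin.cons_succ]
    rw [h0, hwedge, hcontr g ![1, t],
      show ((g : MvPolynomial (Fin 2) ℂ)) = g0 from rfl, hevalt] at hφF
    simp only [Fin.val_zero, pow_zero, one_smul] at hφF
    have key : (powH ![1, t] n') ⊗ₜ[ℂ]
        wedgeFamily n' (fun j => powH ![1, s j] (m+n'-1)) =
        φ ((∏ j, (s j - t))⁻¹ • (g ⊗ₜ[ℂ] wedgeFamily (n'+1) Ffam)) := by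
      rw [map_smul, hφF, ← TensorProduct.smul_tmul', smul_smul,
        inv_mul_cancel₀ hc, one_smul]
    rw [key]
    exact LinearMap.mem_range_self φ _
  have step3 : ∀ (s : Fin n' → ℂ) (p : SymW n'),
      p ⊗ₜ[ℂ] wedgeFamily n' (fun j => powH ![1, s j] (m+n'-1)) ∈ R := by
    intro s p
    by_cases hsinj : Function.Injective s
    · have hp' : p ∈ Submodule.span ℂ
          ((fun t => powH ![1, t] n') '' (Set.range s)ᶜ) :=
        (span_powH n' (Set.range s) (Set.finite_range s)) ▸ Submodule.mem_top
      induction hp' using Submodule.span_induction with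
      | mem x hx =>
        obtain ⟨t, ht, rfl⟩ := hx
        exact core t s (fun j h => ht ⟨j, h⟩)
      | zero =>
        rw [TensorProduct.zero_tmul]; exact R.zero_mem
      | add x y _ _ ihx ihy =>
        rw [TensorProduct.add_tmul]; exact R.add_mem ihx ihy
      | smul a x _ ih =>
        rw [← TensorProduct.smul_tmul']; exact R.smul_mem a ih
    · rw [Function.not_injective_iff] at hsinj
      obtain ⟨i, j, hsij, hij⟩ := hsinj
      have hw0 : wedgeFamily n' (fun j => powH ![1, s j] (m+n'-1)) = 0 := by
        apply Subtype.ext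
        rw [ZeroMemClass.coe_zero]
        exact AlternatingMap.map_eq_zero_of_eq _ _ (by rw [hsij]) hij
      rw [hw0, TensorProduct.tmul_zero]; exact R.zero_mem
  have step4 : ∀ (p : SymW n') (f : Fin n' → SymW (m+n'-1)),
      p ⊗ₜ[ℂ] wedgeFamily n' f ∈ R := by
    intro p f
    let μ : MultilinearMap ℂ (fun _ : Fin n' => ↥(SymW (m+n'-1)))
        ((↥(SymW n')) ⊗[ℂ] ↥(ExtPow n' ↥(SymW (m+n'-1)))) :=
      (TensorProduct.mk ℂ _ _ p).compMultilinearMap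
        (((ExteriorAlgebra.ιMulti ℂ n').toMultilinearMap).codRestrict
          (ExtPow n' _) (fun v => ExteriorAlgebra.ιMulti_range ℂ n' ⟨v, rfl⟩))
    have hμ : ∀ f, μ f = p ⊗ₜ[ℂ] wedgeFamily n' f := fun f => rfl
    rw [← hμ]
    apply multilinear_mem_of_span μ R
      (Set.range (fun t : ℂ => powH ![1, t] (m+n'-1)))
    · have := span_powH (m+n'-1) ∅ Set.finite_empty
      simpa [Set.image_univ] using this
    · intro g hg
      choose sf hs using hg
      have hgf : g = fun j => powH ![1, sf j] (m+n'-1) := funext fun j => (hs j).symm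
      rw [hμ, hgf]
      exact step3 sf p
  rw [eq_top_iff]
  rw [← TensorProduct.span_tmul_eq_top ℂ (↥(SymW n')) (↥(ExtPow n' ↥(SymW (m+n'-1))))]
  rw [Submodule.span_le]
  rintro x ⟨p, w, rfl⟩
  have hw : w ∈ Submodule.span ℂ
      (Set.range (wedgeFamily n' (M := ↥(SymW (m+n'-1))))) :=
    by rw [span_wedgeFamily]; exact Submodule.mem_top
  induction hw using Submodule.span_induction with
  | mem x hx =>
    obtain ⟨f, rfl⟩ := hx
    exact step4 p f
  | zero => rw [TensorProduct.tmul_zero]; exact R.zero_mem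
  | add x y _ _ ihx ihy => rw [TensorProduct.tmul_add]; exact R.add_mem ihx ihy
  | smul a x _ ih => rw [TensorProduct.tmul_smul]; exact R.smul_mem a ih

end LO
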